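/- For a weight vector a ∈ ℝ^n with strictly positive entries such that all 3^n sums ⟨x, a⟩ for x ∈ {-1,0,1}^n are distinct, the map sending a sign vector σ ∈ {-1,1}^n to the number of points x ∈ {0,1}^n with ⟨σ ⊙ a, x⟩ > 0 is a bijection from {-1,1}^n to {0, 1, ..., 2^n - 1}. -/

import Mathlib

/-- The indicator vector of `x : Fin n → Bool` as a real vector. -/
noncomputable def ind {n : ℕ} (x : Fin n → Bool) : Fin n → ℝ :=
  fun i => if x i then 1 else 0

/-- Sign vector associated to `σ : Fin n → Bool`. -/
noncomputable def sgn {n : ℕ} (σ : Fin n → Bool) : Fin n → ℝ :=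
  fun i => if σ i then 1 else -1

/-- Number of hypercube vertices strictly above the hyperplane with normal `w`. -/
noncomputable def Tcount {n : ℕ} (w : Fin n → ℝ) : ℕ :=
  Nat.card {x : Fin n → Bool // 0 < ∑ i, w i * ind x i}

theorem stmt_0 {n : ℕ} (a : Fin n → ℝ) (ha : ∀ i, 0 < a i)
    (hdist : ∀ y z : Fin n → ℝ,
      (∀ i, y i = -1 ∨ y i = 0 ∨ y i = 1) → (∀ i, z i = -1 ∨ z i = 0 ∨ z i = 1) →
      (∑ i, y i * a i) = (∑ i, z i * a i) → y = z) :
    Set.BijOn (fun σ : Fin n → Bool => Tcount (fun i => sgn σ i * a i))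
      Set.univ (Set.Iio (2 ^ n)) := by
  classical
  set c : (Fin n → Bool) → ℝ := fun σ => ∑ i, sgn σ i * a i with hc
  -- injectivity of c
  have hcinj : Function.Injective c := by
    intro σ τ h
    have h1 : ∀ ρ : Fin n → Bool, ∀ i, sgn ρ i = -1 ∨ sgn ρ i = 0 ∨ sgn ρ i = 1 := by
      intro ρ i; unfold sgn; by_cases hs : ρ i <;> simp [hs]
    have heq := hdist (sgn σ) (sgn τ) (h1 σ) (h1 τ) h
    funext i
    have h2 := congrFun heq i
    unfold sgn at h2
    by_cases hs : σ i <;> by_cases ht : τ i <;> simp [hs, ht] at h2 ⊢ <;> norm_num at h2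
  -- key identity
  have key : ∀ σ x : Fin n → Bool,
      c (fun i => xor (x i) (σ i)) = c σ - 2 * ∑ i, sgn σ i * a i * ind x i := by
    intro σ x
    simp only [hc, Finset.mul_sum, ← Finset.sum_sub_distrib]
    apply Finset.sum_congr rfl
    intro i _
    by_cases hx : x i <;> by_cases hs : σ i <;> simp [sgn, ind, hx, hs] <;> ring
  -- Tcount equals the rank of c σ
  have hT : ∀ σ : Fin n → Bool, Tcount (fun i => sgn σ i * a i)
      = (Finset.univ.filter (fun τ => c τ < c σ)).card := by
    intro σ
    rw [Tcount, Nat.card_eq_fintype_card, Fintype.card_subtype]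
    apply Finset.card_bij' (fun x _ => fun i => xor (x i) (σ i))
      (fun τ _ => fun i => xor (τ i) (σ i))
    · intro x hx
      simp only [Finset.mem_filter, Finset.mem_univ, true_and] at hx ⊢
      rw [key σ x]
      linarith
    · intro τ hτ
      simp only [Finset.mem_filter, Finset.mem_univ, true_and] at hτ ⊢
      have h2 := key σ (fun i => xor (τ i) (σ i))
      have h3 : (fun i => xor (xor (τ i) (σ i)) (σ i)) = τ := by
        funext i; simp [Bool.xor_assoc]
      rw [h3] at h2
      linarith
    · intro x _; funext i; simp [Bool.xor_assoc]
    · intro τ _; funext i; simp [Bool.xor_assoc]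
  set f : (Fin n → Bool) → ℕ :=
    fun σ => (Finset.univ.filter (fun τ => c τ < c σ)).card with hf
  have hcard : Fintype.card (Fin n → Bool) = 2 ^ n := by simp
  have hmono : ∀ σ τ : Fin n → Bool, c σ < c τ → f σ < f τ := by
    intro σ τ h
    apply Finset.card_lt_card
    rw [Finset.ssubset_iff_of_subset]
    · exact ⟨σ, by simp [h], by simp⟩
    · intro ρ hρ
      simp only [Finset.mem_filter, Finset.mem_univ, true_and] at hρ ⊢
      linarith
  have hfinj : Function.Injective f := by
    intro σ τ h
    rcases lt_trichotomy (c σ) (c τ) with hlt | heq | hgt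
    · exact absurd h (Nat.ne_of_lt (hmono _ _ hlt))
    · exact hcinj heq
    · exact absurd h.symm (Nat.ne_of_lt (hmono _ _ hgt))
  have hlt2n : ∀ σ, f σ < 2 ^ n := by
    intro σ
    have hsub : Finset.univ.filter (fun τ => c τ < c σ) ⊆ Finset.univ.erase σ := by
      intro ρ hρ
      simp only [Finset.mem_filter, Finset.mem_univ, true_and] at hρ
      simp only [Finset.mem_erase, Finset.mem_univ, and_true]
      intro h; rw [h] at hρ; exact lt_irrefl _ hρ
    have := Finset.card_le_card hsub
    rw [Finset.card_erase_of_mem (Finset.mem_univ σ), Finset.card_univ, hcard] at this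
    have h1 : 0 < 2 ^ n := Nat.pow_pos (by norm_num)
    have h2 : f σ = (Finset.univ.filter (fun τ => c τ < c σ)).card := rfl
    omega
  have himg : Finset.image f Finset.univ = Finset.Iio (2 ^ n) := by
    apply Finset.eq_of_subset_of_card_le
    · intro m hm
      simp only [Finset.mem_image, Finset.mem_univ, true_and] at hm
      obtain ⟨σ, rfl⟩ := hm
      simpa using hlt2n σ
    · rw [Nat.card_Iio, Finset.card_image_of_injective _ hfinj, Finset.card_univ, hcard]
  have hfun : (fun σ : Fin n → Bool => Tcount (fun i => sgn σ i * a i)) = f := funext hT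
  rw [hfun]
  refine ⟨?_, ?_, ?_⟩
  · intro σ _; exact hlt2n σ
  · exact hfinj.injOn
  · intro m hm
    have : m ∈ Finset.Iio (2 ^ n) := Finset.mem_Iio.mpr hm
    rw [← himg] at this
    simp only [Finset.mem_image, Finset.mem_univ, true_and] at this
    obtain ⟨σ, hσ⟩ := this
    exact ⟨σ, Set.mem_univ σ, hσ⟩
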